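/- Let m₁ ≥ m₂ > 0 be reals with m₂/m₁ irrational and m_i the infinite Euclidean sequence (q_i = ⌊m_i/m_{i+1}⌋, m_{i+2} = m_i − q_i m_{i+1}). Then for every real l with m₂ < l < m₁ + m₂, there exist unique integers j ≥ 1 and 0 ≤ q ≤ q_j − 1 such that (m₁+m₂) − m_j + (q−1)·m_{j+1} < l ≤ (m₁+m₂) − m_j + q·m_{j+1}. -/

import Mathlib

/-- For reals `m₁ ≥ m₂ > 0` with `m₂/m₁` irrational and the infinite
Euclidean sequence `m_i` (quotients `q_i = ⌊m_i/m_{i+1}⌋`), every real `l` with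
`m₂ < l < m₁ + m₂` lies in exactly one interval
`((m₁+m₂) − m_j + (q−1) m_{j+1}, (m₁+m₂) − m_j + q m_{j+1}]` with `j ≥ 1` and
`0 ≤ q ≤ q_j − 1`. -/
theorem stmt_8 (m : ℕ → ℝ) (h12 : m 2 ≤ m 1) (h2 : 0 < m 2)
    (hirr : Irrational (m 2 / m 1))
    (hpos : ∀ i, 1 ≤ i → 0 < m i)
    (hrec : ∀ i, 1 ≤ i → m (i + 2) = m i - (⌊m i / m (i + 1)⌋ : ℝ) * m (i + 1))
    (l : ℝ) (hl1 : m 2 < l) (hl2 : l < m 1 + m 2) :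
    ∃! p : ℕ × ℕ, 1 ≤ p.1 ∧ (p.2 : ℤ) ≤ ⌊m p.1 / m (p.1 + 1)⌋ - 1 ∧
      (m 1 + m 2) - m p.1 + ((p.2 : ℝ) - 1) * m (p.1 + 1) < l ∧
      l ≤ (m 1 + m 2) - m p.1 + (p.2 : ℝ) * m (p.1 + 1) := by
  classical
  -- descent: m (i+2) < m (i+1) for i ≥ 1
  have hdesc : ∀ i, 1 ≤ i → m (i + 2) < m (i + 1) := by
    intro i hi
    have h1 : 0 < m (i + 1) := hpos (i + 1) (by omega)
    have hr := hrec i hi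
    have key : m i - (⌊m i / m (i + 1)⌋ : ℝ) * m (i + 1)
        = Int.fract (m i / m (i + 1)) * m (i + 1) := by
      rw [Int.fract]
      field_simp
    have hf := Int.fract_lt_one (m i / m (i + 1))
    nlinarith [hr, key]
  -- monotonicity
  have hmono : ∀ i, 1 ≤ i → m (i + 1) ≤ m i := by
    intro i hi
    match i, hi with
    | 1, _ => exact h12
    | (k + 2), _ => exact (hdesc (k + 1) (by omega)).le
  -- quotients are ≥ 1
  have hq1 : ∀ i, 1 ≤ i → (1 : ℤ) ≤ ⌊m i / m (i + 1)⌋ := by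
    intro i hi
    have h1 : 0 < m (i + 1) := hpos (i + 1) (by omega)
    rw [Int.le_floor]
    push_cast
    rw [le_div_iff₀ h1]
    linarith [hmono i hi]
  have hq1' : ∀ i, 1 ≤ i → (1 : ℝ) ≤ (⌊m i / m (i + 1)⌋ : ℝ) := by
    intro i hi; exact_mod_cast hq1 i hi
  -- s strictly decreasing
  have hSlt : ∀ i, 1 ≤ i → m (i + 1) + m (i + 2) < m i + m (i + 1) := by
    intro i hi
    have h1 : 0 < m (i + 1) := hpos (i + 1) (by omega)
    have hr := hrec i hi
    have := hq1' i hi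
    nlinarith
  have hSanti : ∀ a b, 1 ≤ a → a ≤ b → m b + m (b + 1) ≤ m a + m (a + 1) := by
    intro a b ha hab
    induction b with
    | zero => omega
    | succ k ih =>
      rcases eq_or_lt_of_le hab with h | h
      · rw [h]
      · have hak : a ≤ k := by omega
        have hk1 : 1 ≤ k := le_trans ha hak
        have h1 : m (k + 1) + m (k + 1 + 1) < m k + m (k + 1) := hSlt k hk1
        have h2 := ih hak
        linarith
  -- halving
  have hhalf : ∀ i, 1 ≤ i → m (i + 2) < m i / 2 := by
    intro i hi
    have h1 : 0 < m (i + 1) := hpos (i + 1) (by omega)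
    have hr := hrec i hi
    have := hq1' i hi
    have hd := hdesc i hi
    nlinarith
  have hpow : ∀ k, m (1 + 2 * k) ≤ m 1 / 2 ^ k := by
    intro k
    induction k with
    | zero => norm_num
    | succ k ih =>
      have he : 1 + 2 * (k + 1) = (1 + 2 * k) + 2 := by ring
      rw [he]
      have h1 : 1 ≤ 1 + 2 * k := by omega
      have := hhalf (1 + 2 * k) h1
      have h2 : (0:ℝ) < 2 ^ k := by positivity
      calc m ((1 + 2 * k) + 2) ≤ m (1 + 2 * k) / 2 := (hhalf _ h1).le
        _ ≤ (m 1 / 2 ^ k) / 2 := by linarith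
        _ = m 1 / 2 ^ (k + 1) := by rw [pow_succ]; ring
  -- there are arbitrarily small s_j
  have hsmall : ∀ t : ℝ, 0 < t → ∃ j, 1 ≤ j ∧ m j + m (j + 1) ≤ t := by
    intro t ht
    obtain ⟨k, hk⟩ := pow_unbounded_of_one_lt (2 * m 1 / t) (by norm_num : (1:ℝ) < 2)
    refine ⟨1 + 2 * k, by omega, ?_⟩
    have h2k : (0:ℝ) < 2 ^ k := by positivity
    have hm1 : m 1 / 2 ^ k < t / 2 := by
      rw [div_lt_div_iff₀ h2k (by norm_num : (0:ℝ) < 2)]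
      rw [div_lt_iff₀ ht] at hk
      nlinarith
    have h1 := hpow k
    have h2 := hmono (1 + 2 * k) (by omega)
    linarith
  -- set up t
  set S : ℝ := m 1 + m 2 with hSdef
  set t : ℝ := S - l with htdef
  have ht0 : 0 < t := by simp [htdef]; linarith
  have htS : t < S := by
    have : 0 < m 2 := h2
    simp only [htdef]
    linarith
  -- find minimal j with s_{j+1} ≤ t
  have hex : ∃ n, m (n + 2) + m (n + 3) ≤ t := by
    obtain ⟨j, hj1, hj2⟩ := hsmall t ht0
    refine ⟨j - 1, ?_⟩
    have h1 : j - 1 + 2 = j + 1 := by omega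
    have h2 : j - 1 + 3 = j + 2 := by omega
    rw [h1, h2]
    calc m (j + 1) + m (j + 1 + 1) ≤ m j + m (j + 1) := hSanti j (j + 1) hj1 (by omega)
      _ ≤ t := hj2
  set n₀ := Nat.find hex with hn₀
  set j := n₀ + 1 with hjdef
  have hj1ge : 1 ≤ j := by omega
  have hjle : m (j + 1) + m (j + 2) ≤ t := by
    have := Nat.find_spec hex
    simpa [hjdef] using this
  have hjgt : t < m j + m (j + 1) := by
    rcases Nat.eq_zero_or_pos n₀ with h | h
    · have hj1 : j = 1 := by omega
      rw [hj1]
      calc t < S := htS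
        _ = m 1 + m 2 := rfl
        _ = m 1 + m (1 + 1) := by norm_num
    · have hmin := Nat.find_min hex (m := n₀ - 1) (by omega)
      push_neg at hmin
      have h1 : n₀ - 1 + 2 = j := by omega
      have h2 : n₀ - 1 + 3 = j + 1 := by omega
      rw [h1, h2] at hmin
      exact hmin
  have hmj1 : 0 < m (j + 1) := hpos (j + 1) (by omega)
  have hmj1' : m (j + 1) ≠ 0 := ne_of_gt hmj1
  -- define q
  set r : ℝ := (m j - t) / m (j + 1) with hrdef
  set c : ℤ := ⌈r⌉ with hcdef
  have hc0 : 0 ≤ c := by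
    have h1 : (-1 : ℝ) < r := by
      rw [hrdef, lt_div_iff₀ hmj1]
      linarith
    have h2 : (-1 : ℤ) < c := by
      rw [hcdef]
      exact Int.lt_ceil.mpr (by push_cast; exact h1)
    omega
  set q : ℕ := c.toNat with hqdef
  have hqc : (q : ℤ) = c := Int.toNat_of_nonneg hc0
  have hqcR : (q : ℝ) = (c : ℝ) := by exact_mod_cast hqc
  clear_value q c r j n₀ t S
  have hrecj := hrec j hj1ge
  -- bound c ≤ q_j - 1
  have hcle : c ≤ ⌊m j / m (j + 1)⌋ - 1 := by
    rw [hcdef, Int.ceil_le, hrdef]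
    rw [div_le_iff₀ hmj1]
    push_cast
    nlinarith [hjle, hrecj]
  -- interval membership
  have hleft : S - m j + ((q : ℝ) - 1) * m (j + 1) < l := by
    have h1 : (c : ℝ) < r + 1 := by rw [hcdef]; exact Int.ceil_lt_add_one r
    have h2 : ((c : ℝ) - 1) * m (j + 1) < r * m (j + 1) := by nlinarith
    have h3 : r * m (j + 1) = m j - t := by rw [hrdef]; exact div_mul_cancel₀ _ hmj1'
    rw [hqcR]
    have hl : l = S - t := by rw [htdef]; ring
    rw [hl]
    linarith
  have hright : l ≤ S - m j + (q : ℝ) * m (j + 1) := by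
    have h1 : r ≤ (c : ℝ) := by rw [hcdef]; exact Int.le_ceil r
    have h2 : r * m (j + 1) ≤ (c : ℝ) * m (j + 1) := by nlinarith
    have h3 : r * m (j + 1) = m j - t := by rw [hrdef]; exact div_mul_cancel₀ _ hmj1'
    rw [hqcR]
    have hl : l = S - t := by rw [htdef]; ring
    rw [hl]
    linarith
  refine ⟨(j, q), ⟨hj1ge, by show (q : ℤ) ≤ ⌊m j / m (j + 1)⌋ - 1; rw [hqc]; exact hcle, hleft, hright⟩, ?_⟩
  -- uniqueness
  rintro ⟨j', q'⟩ ⟨hp1, hp2, hp3, hp4⟩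
  simp only at hp1 hp2 hp3 hp4 ⊢
  have hmj'1 : 0 < m (j' + 1) := hpos (j' + 1) (by omega)
  have hrecj' := hrec j' hp1
  have hq'R : (q' : ℝ) ≤ (⌊m j' / m (j' + 1)⌋ : ℝ) - 1 := by
    have : (q' : ℤ) ≤ ⌊m j' / m (j' + 1)⌋ - 1 := hp2
    push_cast [Int.cast_le] at this ⊢
    exact_mod_cast hp2
  -- t ∈ [s_{j'+1}, s_{j'})
  have ht1 : t < m j' + m (j' + 1) := by
    have hq'0 : (0:ℝ) ≤ (q' : ℝ) := Nat.cast_nonneg _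
    have hst : S - t = l := by rw [htdef]; ring
    have hmul : 0 ≤ (q' : ℝ) * m (j' + 1) := mul_nonneg hq'0 hmj'1.le
    have hexp : ((q' : ℝ) - 1) * m (j' + 1) = (q' : ℝ) * m (j' + 1) - m (j' + 1) := by ring
    rw [hexp] at hp3
    linarith
  have ht2 : m (j' + 1) + m (j' + 2) ≤ t := by
    have hst : S - t = l := by rw [htdef]; ring
    have hmul : (q' : ℝ) * m (j' + 1) ≤ ((⌊m j' / m (j' + 1)⌋ : ℝ) - 1) * m (j' + 1) :=
      mul_le_mul_of_nonneg_right hq'R hmj'1.le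
    have hexp : ((⌊m j' / m (j' + 1)⌋ : ℝ) - 1) * m (j' + 1)
        = (⌊m j' / m (j' + 1)⌋ : ℝ) * m (j' + 1) - m (j' + 1) := by ring
    rw [hexp] at hmul
    linarith
  -- j' = j
  have hjj : j' = j := by
    rcases lt_trichotomy j' j with h | h | h
    · exfalso
      have : m j + m (j + 1) ≤ m (j' + 1) + m (j' + 1 + 1) :=
        hSanti (j' + 1) j (by omega) (by omega)
      have h2 : m (j' + 1) + m (j' + 2) ≤ t := ht2
      have : m j + m (j + 1) ≤ t := by
        calc m j + m (j + 1) ≤ m (j' + 1) + m (j' + 1 + 1) := this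
          _ = m (j' + 1) + m (j' + 2) := by norm_num
          _ ≤ t := h2
      linarith [hjgt]
    · exact h
    · exfalso
      have : m j' + m (j' + 1) ≤ m (j + 1) + m (j + 1 + 1) :=
        hSanti (j + 1) j' (by omega) (by omega)
      have : m j' + m (j' + 1) ≤ t := by
        calc m j' + m (j' + 1) ≤ m (j + 1) + m (j + 1 + 1) := this
          _ = m (j + 1) + m (j + 2) := by norm_num
          _ ≤ t := hjle
      linarith [ht1]
  subst hjj
  -- q' = q
  have hst : S - t = l := by rw [htdef]; ring
  have hx1 : (q' : ℝ) * m (j' + 1) - m (j' + 1) < m j' - t := by linarith [hp3]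
  have hx2 : m j' - t ≤ (q' : ℝ) * m (j' + 1) := by linarith [hp4]
  have hy1 : (q : ℝ) * m (j' + 1) - m (j' + 1) < m j' - t := by
    have hexp : ((q : ℝ) - 1) * m (j' + 1) = (q : ℝ) * m (j' + 1) - m (j' + 1) := by ring
    linarith [hleft, hexp]
  have hy2 : m j' - t ≤ (q : ℝ) * m (j' + 1) := by linarith [hright]
  have hq'q : (q' : ℝ) < (q : ℝ) + 1 := by
    have h : (q' : ℝ) * m (j' + 1) < ((q : ℝ) + 1) * m (j' + 1) := by
      rw [add_mul, one_mul]; linarith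
    exact lt_of_mul_lt_mul_right h hmj'1.le
  have hqq' : (q : ℝ) < (q' : ℝ) + 1 := by
    have h : (q : ℝ) * m (j' + 1) < ((q' : ℝ) + 1) * m (j' + 1) := by
      rw [add_mul, one_mul]; linarith
    exact lt_of_mul_lt_mul_right h hmj'1.le
  have h1 : q' < q + 1 := by exact_mod_cast hq'q
  have h2 : q < q' + 1 := by exact_mod_cast hqq'
  have : q' = q := by omega
  simp [this]
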